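/- Let v₁, v₂, v₃ ∈ ℝ³ be linearly independent vectors of the form v_i = (x_i, y_i, 1), and let ṽ₁, ṽ₂, ṽ₃ ∈ ℝ³ be linearly independent vectors of the form ṽ_i = (x̃_i, ỹ_i, 1). Let ℓ_{ij} = √((x_i−x_j)²+(y_i−y_j)²) and ℓ̃_{ij} = √((x̃_i−x̃_j)²+(ỹ_i−ỹ_j)²). Let a, b, c ∈ ℝ be such that the quadratic form q(x,y,z) = x²+y²+2axz+2byz+cz² vanishes at v₁, v₂, v₃, and let ã, b̃, c̃ ∈ ℝ be such that q̃(x,y,z) = x²+y²+2ãxz+2b̃yz+c̃z² vanishes at ṽ₁, ṽ₂, ṽ₃. Let F : ℝ³ → ℝ³ be a linear map with F(v_i) = μ_i ṽ_i for some μ_i ≠ 0, i = 1,2,3. Then the following are equivalent: (i) there exists c₀ ≠ 0 such that q̃(F(v)) = c₀·q(v) for all v ∈ ℝ³ (i.e., the induced projective map takes the circumcircle of the first triangle to the circumcircle of the second); (ii) there exists μ ≠ 0 with μ₁ = μ·e^{−u₁}, μ₂ = μ·e^{−u₂}, μ₃ = μ·e^{−u₃}, where e^{u₁} = (ℓ̃₁₂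 ℓ₂₃ ℓ̃₃₁)/(ℓ₁₂ ℓ̃₂₃ ℓ₃₁) and cyclically for u₂, u₃. -/

import Mathlib

lemma expandQ (x y : Fin 3 → ℝ) (v : Fin 3 → (Fin 3 → ℝ))
    (hv : ∀ i, v i = ![x i, y i, 1])
    (a b c : ℝ) (q : (Fin 3 → ℝ) → ℝ)
    (hq : ∀ w, q w = (w 0) ^ 2 + (w 1) ^ 2 + 2 * a * (w 0) * (w 2)
                      + 2 * b * (w 1) * (w 2) + c * (w 2) ^ 2)
    (hq0 : ∀ i, q (v i) = 0)
    (ell : Fin 3 → Fin 3 → ℝ)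
    (hell : ∀ i j, ell i j = Real.sqrt ((x i - x j) ^ 2 + (y i - y j) ^ 2))
    (t0 t1 t2 : ℝ) :
    q (t0 • v 0 + t1 • v 1 + t2 • v 2)
      = -(t0 * t1 * (ell 0 1) ^ 2 + t1 * t2 * (ell 1 2) ^ 2 + t2 * t0 * (ell 2 0) ^ 2) := by
  have hE : ∀ i, (x i) ^ 2 + (y i) ^ 2 + 2 * a * x i + 2 * b * y i + c = 0 := by
    intro i
    have h := hq0 i
    rw [hq, hv] at h
    simp at h
    linarith
  have hL : ∀ i j, (ell i j) ^ 2 = (x i - x j) ^ 2 + (y i - y j) ^ 2 := by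
    intro i j; rw [hell, Real.sq_sqrt (by positivity)]
  rw [hq]
  simp only [hv, Pi.add_apply, Pi.smul_apply, smul_eq_mul, Matrix.cons_val_zero,
    Matrix.cons_val_one, Matrix.head_cons, Matrix.cons_val_two, Matrix.tail_cons, mul_one, hL]
  linear_combination (t0 * (t0 + t1 + t2)) * hE 0 + (t1 * (t0 + t1 + t2)) * hE 1
    + (t2 * (t0 + t1 + t2)) * hE 2

lemma ellNe (x y : Fin 3 → ℝ) (v : Fin 3 → (Fin 3 → ℝ))
    (hv : ∀ i, v i = ![x i, y i, 1])
    (hli : LinearIndependent ℝ v)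
    (ell : Fin 3 → Fin 3 → ℝ)
    (hell : ∀ i j, ell i j = Real.sqrt ((x i - x j) ^ 2 + (y i - y j) ^ 2)) :
    ∀ i j, i ≠ j → ell i j ≠ 0 := by
  intro i j hij h
  rw [hell] at h
  have h2 : (x i - x j) ^ 2 + (y i - y j) ^ 2 = 0 := by
    have := Real.sqrt_eq_zero (by positivity : (0:ℝ) ≤ (x i - x j) ^ 2 + (y i - y j) ^ 2)
    exact this.mp h
  have hx : x i = x j := by nlinarith [sq_nonneg (x i - x j), sq_nonneg (y i - y j)]
  have hy : y i = y j := by nlinarith [sq_nonneg (x i - x j), sq_nonneg (y i - y j)]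
  have : v i = v j := by rw [hv, hv, hx, hy]
  exact hij (hli.injective this)

/-- The projective map determined by `F(v i) = μ i • ṽ i` maps the circumcircle
of the triangle with vertices `(x i, y i)` to the circumcircle of the triangle
with vertices `(x̃ i, ỹ i)` if and only if the weights `μ i` are proportional to
`e^{−u i}`, where the `u i` are the logarithmic conformal scale factors of the
two triangles. -/
theorem circumcircle_preserving_iff_weights
    (x y xt yt : Fin 3 → ℝ)
    (v vt : Fin 3 → (Fin 3 → ℝ))
    (hv : ∀ i, v i = ![x i, y i, 1]) (hvt : ∀ i, vt i = ![xt i, yt i, 1])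
    (hli : LinearIndependent ℝ v) (hlit : LinearIndependent ℝ vt)
    (ell ellt : Fin 3 → Fin 3 → ℝ)
    (hell : ∀ i j, ell i j = Real.sqrt ((x i - x j) ^ 2 + (y i - y j) ^ 2))
    (hellt : ∀ i j, ellt i j = Real.sqrt ((xt i - xt j) ^ 2 + (yt i - yt j) ^ 2))
    (a b c a' b' c' : ℝ)
    (q qt : (Fin 3 → ℝ) → ℝ)
    (hq : ∀ w, q w = (w 0) ^ 2 + (w 1) ^ 2 + 2 * a * (w 0) * (w 2)
                      + 2 * b * (w 1) * (w 2) + c * (w 2) ^ 2)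
    (hqt : ∀ w, qt w = (w 0) ^ 2 + (w 1) ^ 2 + 2 * a' * (w 0) * (w 2)
                      + 2 * b' * (w 1) * (w 2) + c' * (w 2) ^ 2)
    (hq0 : ∀ i, q (v i) = 0) (hqt0 : ∀ i, qt (vt i) = 0)
    (F : (Fin 3 → ℝ) →ₗ[ℝ] (Fin 3 → ℝ))
    (μ : Fin 3 → ℝ) (hμ : ∀ i, μ i ≠ 0)
    (hF : ∀ i, F (v i) = μ i • vt i)
    (u : Fin 3 → ℝ)
    (hu1 : Real.exp (u 0) = (ellt 0 1 * ell 1 2 * ellt 2 0) / (ell 0 1 * ellt 1 2 * ell 2 0))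
    (hu2 : Real.exp (u 1) = (ellt 1 2 * ell 2 0 * ellt 0 1) / (ell 1 2 * ellt 2 0 * ell 0 1))
    (hu3 : Real.exp (u 2) = (ellt 2 0 * ell 0 1 * ellt 1 2) / (ell 2 0 * ellt 0 1 * ell 1 2)) :
    (∃ c0 : ℝ, c0 ≠ 0 ∧ ∀ w, qt (F w) = c0 * q w) ↔
    (∃ m : ℝ, m ≠ 0 ∧ ∀ i, μ i = m * Real.exp (-(u i))) := by
  have hl01 : ell 0 1 ≠ 0 := ellNe x y v hv hli ell hell 0 1 (by decide)
  have hl12 : ell 1 2 ≠ 0 := ellNe x y v hv hli ell hell 1 2 (by decide)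
  have hl20 : ell 2 0 ≠ 0 := ellNe x y v hv hli ell hell 2 0 (by decide)
  have hlt01 : ellt 0 1 ≠ 0 := ellNe xt yt vt hvt hlit ellt hellt 0 1 (by decide)
  have hlt12 : ellt 1 2 ≠ 0 := ellNe xt yt vt hvt hlit ellt hellt 1 2 (by decide)
  have hlt20 : ellt 2 0 ≠ 0 := ellNe xt yt vt hvt hlit ellt hellt 2 0 (by decide)
  have hE0 : Real.exp (u 0) ≠ 0 := (Real.exp_pos _).ne'
  have hE1 : Real.exp (u 1) ≠ 0 := (Real.exp_pos _).ne'
  have hE2 : Real.exp (u 2) ≠ 0 := (Real.exp_pos _).ne'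
  have key01 : Real.exp (u 0) * Real.exp (u 1) * (ell 0 1) ^ 2 = (ellt 0 1) ^ 2 := by
    rw [hu1, hu2]; field_simp
  have key12 : Real.exp (u 1) * Real.exp (u 2) * (ell 1 2) ^ 2 = (ellt 1 2) ^ 2 := by
    rw [hu2, hu3]; field_simp
  have key20 : Real.exp (u 2) * Real.exp (u 0) * (ell 2 0) ^ 2 = (ellt 2 0) ^ 2 := by
    rw [hu3, hu1]; field_simp
  constructor
  · rintro ⟨c0, hc0, h⟩
    have h01 : μ 0 * μ 1 * (ellt 0 1) ^ 2 = c0 * (ell 0 1) ^ 2 := by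
      have hFv : F (v 0 + v 1) = μ 0 • vt 0 + μ 1 • vt 1 + (0:ℝ) • vt 2 := by
        rw [map_add, hF 0, hF 1]; simp
      have hvv : v 0 + v 1 = (1:ℝ) • v 0 + (1:ℝ) • v 1 + (0:ℝ) • v 2 := by simp
      have e1 := h (v 0 + v 1)
      rw [hvv] at e1
      rw [← hvv, hFv, expandQ xt yt vt hvt a' b' c' qt hqt hqt0 ellt hellt, hvv,
        expandQ x y v hv a b c q hq hq0 ell hell] at e1
      linarith
    have h12 : μ 1 * μ 2 * (ellt 1 2) ^ 2 = c0 * (ell 1 2) ^ 2 := by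
      have hFv : F (v 1 + v 2) = (0:ℝ) • vt 0 + μ 1 • vt 1 + μ 2 • vt 2 := by
        rw [map_add, hF 1, hF 2]; simp
      have hvv : v 1 + v 2 = (0:ℝ) • v 0 + (1:ℝ) • v 1 + (1:ℝ) • v 2 := by simp
      have e1 := h (v 1 + v 2)
      rw [hFv, expandQ xt yt vt hvt a' b' c' qt hqt hqt0 ellt hellt, hvv,
        expandQ x y v hv a b c q hq hq0 ell hell] at e1
      linarith
    have h20 : μ 2 * μ 0 * (ellt 2 0) ^ 2 = c0 * (ell 2 0) ^ 2 := by
      have hFv : F (v 2 + v 0) = μ 0 • vt 0 + (0:ℝ) • vt 1 + μ 2 • vt 2 := by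
        rw [map_add, hF 2, hF 0]; simp; abel
      have hvv : v 2 + v 0 = (1:ℝ) • v 0 + (0:ℝ) • v 1 + (1:ℝ) • v 2 := by
        simp; abel
      have e1 := h (v 2 + v 0)
      rw [hFv, expandQ xt yt vt hvt a' b' c' qt hqt hqt0 ellt hellt, hvv,
        expandQ x y v hv a b c q hq hq0 ell hell] at e1
      linarith
    have g01 : (μ 0 * Real.exp (u 0)) * (μ 1 * Real.exp (u 1)) = c0 := by
      have h' : ((μ 0 * Real.exp (u 0)) * (μ 1 * Real.exp (u 1))) * (ell 0 1) ^ 2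
          = c0 * (ell 0 1) ^ 2 := by linear_combination h01 + (μ 0 * μ 1) * key01
      exact mul_right_cancel₀ (pow_ne_zero _ hl01) h'
    have g12 : (μ 1 * Real.exp (u 1)) * (μ 2 * Real.exp (u 2)) = c0 := by
      have h' : ((μ 1 * Real.exp (u 1)) * (μ 2 * Real.exp (u 2))) * (ell 1 2) ^ 2
          = c0 * (ell 1 2) ^ 2 := by linear_combination h12 + (μ 1 * μ 2) * key12
      exact mul_right_cancel₀ (pow_ne_zero _ hl12) h'
    have g20 : (μ 2 * Real.exp (u 2)) * (μ 0 * Real.exp (u 0)) = c0 := by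
      have h' : ((μ 2 * Real.exp (u 2)) * (μ 0 * Real.exp (u 0))) * (ell 2 0) ^ 2
          = c0 * (ell 2 0) ^ 2 := by linear_combination h20 + (μ 2 * μ 0) * key20
      exact mul_right_cancel₀ (pow_ne_zero _ hl20) h'
    have hm1 : μ 1 * Real.exp (u 1) = μ 0 * Real.exp (u 0) := by
      have h' : (μ 1 * Real.exp (u 1)) * (μ 2 * Real.exp (u 2))
          = (μ 0 * Real.exp (u 0)) * (μ 2 * Real.exp (u 2)) := by
        linear_combination g12 - g20
      exact mul_right_cancel₀ (mul_ne_zero (hμ 2) hE2) h'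
    have hm2 : μ 2 * Real.exp (u 2) = μ 0 * Real.exp (u 0) := by
      have h' : (μ 2 * Real.exp (u 2)) * (μ 1 * Real.exp (u 1))
          = (μ 0 * Real.exp (u 0)) * (μ 1 * Real.exp (u 1)) := by
        linear_combination g12 - g01
      exact mul_right_cancel₀ (mul_ne_zero (hμ 1) hE1) h'
    refine ⟨μ 0 * Real.exp (u 0), mul_ne_zero (hμ 0) hE0, ?_⟩
    have g0 : μ 0 = (μ 0 * Real.exp (u 0)) * Real.exp (-(u 0)) := by
      rw [Real.exp_neg]; field_simp
    have g1 : μ 1 = (μ 0 * Real.exp (u 0)) * Real.exp (-(u 1)) := by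
      rw [Real.exp_neg]; field_simp; linear_combination hm1
    have g2 : μ 2 = (μ 0 * Real.exp (u 0)) * Real.exp (-(u 2)) := by
      rw [Real.exp_neg]; field_simp; linear_combination hm2
    intro i
    fin_cases i
    · exact g0
    · exact g1
    · exact g2
  · rintro ⟨m, hm, hμeq⟩
    refine ⟨m ^ 2, pow_ne_zero _ hm, ?_⟩
    have hμ0 : μ 0 = m / Real.exp (u 0) := by rw [hμeq 0, Real.exp_neg]; ring
    have hμ1 : μ 1 = m / Real.exp (u 1) := by rw [hμeq 1, Real.exp_neg]; ring
    have hμ2 : μ 2 = m / Real.exp (u 2) := by rw [hμeq 2, Real.exp_neg]; ring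
    have k01 : μ 0 * μ 1 * (ellt 0 1) ^ 2 = m ^ 2 * (ell 0 1) ^ 2 := by
      rw [hμ0, hμ1, ← key01]; field_simp
    have k12 : μ 1 * μ 2 * (ellt 1 2) ^ 2 = m ^ 2 * (ell 1 2) ^ 2 := by
      rw [hμ1, hμ2, ← key12]; field_simp
    have k20 : μ 2 * μ 0 * (ellt 2 0) ^ 2 = m ^ 2 * (ell 2 0) ^ 2 := by
      rw [hμ2, hμ0, ← key20]; field_simp
    intro w
    let bas : Module.Basis (Fin 3) ℝ (Fin 3 → ℝ) :=
      basisOfLinearIndependentOfCardEqFinrank hli (by simp)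
    obtain ⟨s0, s1, s2, hw⟩ : ∃ s0 s1 s2 : ℝ, w = s0 • v 0 + s1 • v 1 + s2 • v 2 := by
      refine ⟨bas.repr w 0, bas.repr w 1, bas.repr w 2, ?_⟩
      have h := bas.sum_repr w
      rw [Fin.sum_univ_three] at h
      have hb : ∀ i, bas i = v i :=
        fun i => congrFun (coe_basisOfLinearIndependentOfCardEqFinrank _ _) i
      rw [hb, hb, hb] at h
      exact h.symm
    have hFw : F w = (s0 * μ 0) • vt 0 + (s1 * μ 1) • vt 1 + (s2 * μ 2) • vt 2 := by
      rw [hw, map_add, map_add, map_smul, map_smul, map_smul, hF 0, hF 1, hF 2,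
        smul_smul, smul_smul, smul_smul]
    rw [hFw, hw, expandQ xt yt vt hvt a' b' c' qt hqt hqt0 ellt hellt,
      expandQ x y v hv a b c q hq hq0 ell hell]
    linear_combination (-(s0 * s1)) * k01 + (-(s1 * s2)) * k12 + (-(s2 * s0)) * k20
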